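/- Define ς(x,ξ) = x₃ξ₁ + x₄ξ₂ + x₁ξ₃ + x₂ξ₄ and κ(x,ξ) = x₄ξ₁ − x₃ξ₂ − x₂ξ₃ + x₁ξ₄. Let (x(s), ξ(s)) be a C¹ solution of the Hamiltonian system ẋ = ς(x,ξ)·X(x) + κ(x,ξ)·Y(x), ξ̇ = −ς(x,ξ)·X(ξ) − κ(x,ξ)·Y(ξ), with x(0) ∈ H. Then x(s) ∈ H for all s, the curve x is horizontal with respect to span{X,Y} (α ≡ 0 along x), and its horizontal coordinates satisfy β(s) = ς(x(s),ξ(s)) and γ(s) = κ(x(s),ξ(s)) for all s; in particular the Hamiltonian (1/2)(ς² + κ²) equals the energy (1/2)(β² + γ²) along the solution. -/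

import Mathlib

open Real Set

noncomputable section

/-- Pseudo-Euclidean inner product of signature (2,2) on ℝ⁴. -/
def ip (x y : Fin 4 → ℝ) : ℝ :=
  -(x 0 * y 0) - x 1 * y 1 + x 2 * y 2 + x 3 * y 3

/-- Anti-de Sitter space H = {x : ⟨x,x⟩ = -1}. -/
def AdS : Set (Fin 4 → ℝ) := {x | ip x x = -1}

/-- The vector field T(x) = (−x₂, x₁, x₄, −x₃). -/
def Tf (x : Fin 4 → ℝ) : Fin 4 → ℝ := ![-(x 1), x 0, x 3, -(x 2)]

/-- The vector field X(x) = (x₃, x₄, x₁, x₂). -/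
def Xf (x : Fin 4 → ℝ) : Fin 4 → ℝ := ![x 2, x 3, x 0, x 1]

/-- The vector field Y(x) = (x₄, −x₃, −x₂, x₁). -/
def Yf (x : Fin 4 → ℝ) : Fin 4 → ℝ := ![x 3, -(x 2), -(x 1), x 0]

/-- The normal vector field N(x) = x. -/
def Nf (x : Fin 4 → ℝ) : Fin 4 → ℝ := x

/-- α(s) = ⟨ċ(s), T(c(s))⟩. -/
def alphaC (c : ℝ → Fin 4 → ℝ) (s : ℝ) : ℝ := ip (deriv c s) (Tf (c s))

/-- β(s) = ⟨ċ(s), X(c(s))⟩. -/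
def betaC (c : ℝ → Fin 4 → ℝ) (s : ℝ) : ℝ := ip (deriv c s) (Xf (c s))

/-- γ(s) = ⟨ċ(s), Y(c(s))⟩. -/
def gammaC (c : ℝ → Fin 4 → ℝ) (s : ℝ) : ℝ := ip (deriv c s) (Yf (c s))

/-- ς(x,ξ) = x₃ξ₁ + x₄ξ₂ + x₁ξ₃ + x₂ξ₄. -/
def sigmaF (x ξ : Fin 4 → ℝ) : ℝ :=
  x 2 * ξ 0 + x 3 * ξ 1 + x 0 * ξ 2 + x 1 * ξ 3

/-- κ(x,ξ) = x₄ξ₁ − x₃ξ₂ − x₂ξ₃ + x₁ξ₄. -/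
def kappaF (x ξ : Fin 4 → ℝ) : ℝ :=
  x 3 * ξ 0 - x 2 * ξ 1 - x 1 * ξ 2 + x 0 * ξ 3

/-- solutions of the sub-Riemannian Hamiltonian system
ẋ = ς·X(x) + κ·Y(x), ξ̇ = −ς·X(ξ) − κ·Y(ξ) starting on AdS stay on AdS, are
horizontal with respect to span{X,Y}, and have β = ς, γ = κ; in particular the
Hamiltonian (1/2)(ς² + κ²) equals the energy (1/2)(β² + γ²) along the solution. -/
theorem subRiemannian_hamiltonian_solutions (x ξ : ℝ → Fin 4 → ℝ)
    (hx : ∀ s, HasDerivAt x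
      ((sigmaF (x s) (ξ s)) • Xf (x s) + (kappaF (x s) (ξ s)) • Yf (x s)) s)
    (hξ : ∀ s, HasDerivAt ξ
      ((-(sigmaF (x s) (ξ s))) • Xf (ξ s) + (-(kappaF (x s) (ξ s))) • Yf (ξ s)) s)
    (h0 : x 0 ∈ AdS) :
    ∀ s, x s ∈ AdS ∧ alphaC x s = 0 ∧
      betaC x s = sigmaF (x s) (ξ s) ∧ gammaC x s = kappaF (x s) (ξ s) ∧
      (1/2 : ℝ) * ((sigmaF (x s) (ξ s))^2 + (kappaF (x s) (ξ s))^2)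
        = (1/2 : ℝ) * ((betaC x s)^2 + (gammaC x s)^2) := by
  -- coordinatewise derivatives
  have hxi : ∀ s i, HasDerivAt (fun t => x t i)
      (((sigmaF (x s) (ξ s)) • Xf (x s) + (kappaF (x s) (ξ s)) • Yf (x s)) i) s :=
    fun s i => hasDerivAt_pi.1 (hx s) i
  -- the AdS constraint is preserved
  have hg : ∀ s, HasDerivAt (fun t => ip (x t) (x t)) 0 s := by
    intro s
    have h0 := hxi s 0
    have h1 := hxi s 1
    have h2 := hxi s 2
    have h3 := hxi s 3
    simp only [Pi.add_apply, Pi.smul_apply, smul_eq_mul, Xf, Yf,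
      Matrix.cons_val_zero, Matrix.cons_val_one, Matrix.head_cons,
      Matrix.cons_val_two, Matrix.cons_val_three, Matrix.tail_cons] at h0 h1 h2 h3
    have key := (((h0.mul h0).neg.sub (h1.mul h1)).add (h2.mul h2)).add (h3.mul h3)
    convert key using 1
    · rfl
    · rfl
    · rfl
    · ring
  have hAdS : ∀ s, ip (x s) (x s) = -1 := by
    intro s
    have hc := is_const_of_deriv_eq_zero (f := fun t => ip (x t) (x t))
      (fun t => (hg t).differentiableAt) (fun t => (hg t).deriv) s 0
    simpa [h0] using hc.trans h0
  intro s
  have hd : deriv x s = (sigmaF (x s) (ξ s)) • Xf (x s) + (kappaF (x s) (ξ s)) • Yf (x s) :=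
    (hx s).deriv
  have hA := hAdS s
  have ha : alphaC x s = 0 := by
    simp only [alphaC, hd, ip, Tf, Xf, Yf, Pi.add_apply, Pi.smul_apply, smul_eq_mul,
      Matrix.cons_val_zero, Matrix.cons_val_one, Matrix.head_cons,
      Matrix.cons_val_two, Matrix.cons_val_three, Matrix.tail_cons]
    ring
  have hb : betaC x s = sigmaF (x s) (ξ s) := by
    simp only [betaC, hd, ip, Xf, Yf, Pi.add_apply, Pi.smul_apply, smul_eq_mul,
      Matrix.cons_val_zero, Matrix.cons_val_one, Matrix.head_cons,
      Matrix.cons_val_two, Matrix.cons_val_three, Matrix.tail_cons]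
    simp only [ip] at hA
    linear_combination (-(sigmaF (x s) (ξ s))) * hA
  have hc : gammaC x s = kappaF (x s) (ξ s) := by
    simp only [gammaC, hd, ip, Xf, Yf, Pi.add_apply, Pi.smul_apply, smul_eq_mul,
      Matrix.cons_val_zero, Matrix.cons_val_one, Matrix.head_cons,
      Matrix.cons_val_two, Matrix.cons_val_three, Matrix.tail_cons]
    simp only [ip] at hA
    linear_combination (-(kappaF (x s) (ξ s))) * hA
  exact ⟨hA, ha, hb, hc, by rw [hb, hc]⟩
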